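/- In the standing setup, assume that τ₁^l : V → W* is injective and that R is the Nichols algebra of V. Then: (1) R₀ = k, i.e. the space {r ∈ R : S(1)r = 0} of elements of the Verma module R annihilated by S(1) equals k·1; (2) for every left ℬ-module M, the ℬ-linear map κ_M : R⊗M₀ → M, κ_M(r⊗m) = rm, is injective. -/

import Mathlib

open TensorProduct BigOperators

noncomputable section

namespace QB

variable (k : Type) [Field k]

/-- Data of a Hopf algebra structure (with bijective antipode, whose inverse is the
pode) on a `k`-algebra `H`. -/
structure HopfData (H : Type) [Ring H] [Algebra k H] where
  comul : H →ₗ[k] H ⊗[k] H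
  counit : H →ₗ[k] k
  antipode : H →ₗ[k] H
  pode : H →ₗ[k] H
  comul_one : comul 1 = 1 ⊗ₜ[k] 1
  comul_mul : ∀ a b : H, comul (a * b) = comul a * comul b
  counit_one : counit 1 = 1
  counit_mul : ∀ a b : H, counit (a * b) = counit a * counit b
  coassoc : ∀ a : H,
    (TensorProduct.assoc k H H H) ((comul.rTensor H) (comul a)) = (comul.lTensor H) (comul a)
  counit_comul : ∀ a : H, (TensorProduct.lid k H) ((counit.rTensor H) (comul a)) = a
  comul_counit : ∀ a : H, (TensorProduct.rid k H) ((counit.lTensor H) (comul a)) = a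
  antipode_conv : ∀ a : H, (LinearMap.mul' k H) ((antipode.rTensor H) (comul a)) = counit a • 1
  conv_antipode : ∀ a : H, (LinearMap.mul' k H) ((antipode.lTensor H) (comul a)) = counit a • 1
  pode_antipode : ∀ a : H, pode (antipode a) = a
  antipode_pode : ∀ a : H, antipode (pode a) = a

/-- A (left-left) Yetter-Drinfeld module over the Hopf algebra `(H, D)`. -/
structure YDMod (H : Type) [Ring H] [Algebra k H] (D : HopfData k H)
    (V : Type) [AddCommGroup V] [Module k V] where
  act : H →ₗ[k] V →ₗ[k] V
  act_one : ∀ v, act 1 v = v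
  act_mul : ∀ (a b : H) (v : V), act (a * b) v = act a (act b v)
  coact : V →ₗ[k] H ⊗[k] V
  coact_counit : ∀ v, (TensorProduct.lid k V) ((D.counit.rTensor V) (coact v)) = v
  coact_coassoc : ∀ v,
    (TensorProduct.assoc k H H V) ((D.comul.rTensor V) (coact v)) = (coact.lTensor H) (coact v)
  yd_compat : ∀ (a : H) (v : V) (p q : ℕ) (a1 a2 a3 : Fin p → H)
      (vJ : Fin q → H) (vV : Fin q → V),
    (D.comul.rTensor H) (D.comul a) = ∑ i, (a1 i ⊗ₜ[k] a2 i) ⊗ₜ[k] a3 i →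
    coact v = ∑ j, vJ j ⊗ₜ[k] vV j →
    coact (act a v) = ∑ i, ∑ j, (a1 i * vJ j * D.antipode (a3 i)) ⊗ₜ[k] act (a2 i) (vV j)

end QB

namespace QB

variable (k : Type) [Field k]

/-- A braided graded Hopf algebra `R` (given as an ordinary `k`-algebra together with a
braided coproduct) in the category of Yetter-Drinfeld modules over `(J, D)`, with
`R(0) = k`, together with its antipode. -/
structure BGH (J : Type) [Ring J] [Algebra k J] (D : HopfData k J)
    (R : Type) [Ring R] [Algebra k R] extends YDMod k J D R where
  grade : ℕ → Submodule k R
  internal : DirectSum.IsInternal grade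
  one_grade : (1 : R) ∈ grade 0
  mul_grade : ∀ {m n : ℕ} {r s : R}, r ∈ grade m → s ∈ grade n → r * s ∈ grade (m + n)
  grade0 : grade 0 = Submodule.span k {(1 : R)}
  comul : R →ₗ[k] R ⊗[k] R
  counit : R →ₗ[k] k
  comul_one : comul 1 = 1 ⊗ₜ[k] 1
  counit_one : counit 1 = 1
  counit_mul : ∀ r s : R, counit (r * s) = counit r * counit s
  coassoc : ∀ r : R,
    (TensorProduct.assoc k R R R) ((comul.rTensor R) (comul r)) = (comul.lTensor R) (comul r)
  counit_comul : ∀ r : R, (TensorProduct.lid k R) ((counit.rTensor R) (comul r)) = r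
  comul_counit : ∀ r : R, (TensorProduct.rid k R) ((counit.lTensor R) (comul r)) = r
  /-- braided multiplicativity of the coproduct -/
  comul_mul : ∀ (r s : R) (p q u : ℕ) (r1 r2 : Fin p → R) (rJ : Fin p → Fin q → J)
      (rV : Fin p → Fin q → R) (s1 s2 : Fin u → R),
    comul r = ∑ i, r1 i ⊗ₜ[k] r2 i →
    (∀ i, coact (r2 i) = ∑ j, rJ i j ⊗ₜ[k] rV i j) →
    comul s = ∑ t, s1 t ⊗ₜ[k] s2 t →
    comul (r * s) = ∑ i, ∑ j, ∑ t, (r1 i * act (rJ i j) (s1 t)) ⊗ₜ[k] (rV i j * s2 t)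
  /-- `R` is a `J`-module algebra -/
  act_mul_alg : ∀ (a : J) (r s : R) (p : ℕ) (a1 a2 : Fin p → J),
    D.comul a = ∑ i, a1 i ⊗ₜ[k] a2 i →
    act a (r * s) = ∑ i, act (a1 i) r * act (a2 i) s
  act_one_alg : ∀ a : J, act a (1 : R) = D.counit a • (1 : R)
  /-- `R` is a `J`-comodule algebra -/
  coact_mul : ∀ (r s : R) (p q : ℕ) (rJ : Fin p → J) (rV : Fin p → R)
      (sJ : Fin q → J) (sV : Fin q → R),
    coact r = ∑ i, rJ i ⊗ₜ[k] rV i → coact s = ∑ j, sJ j ⊗ₜ[k] sV j →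
    coact (r * s) = ∑ i, ∑ j, (rJ i * sJ j) ⊗ₜ[k] (rV i * sV j)
  coact_one : coact 1 = 1 ⊗ₜ[k] 1
  /-- the coproduct is `J`-linear -/
  comul_act : ∀ (a : J) (r : R) (p q : ℕ) (a1 a2 : Fin p → J) (r1 r2 : Fin q → R),
    D.comul a = ∑ i, a1 i ⊗ₜ[k] a2 i → comul r = ∑ j, r1 j ⊗ₜ[k] r2 j →
    comul (act a r) = ∑ i, ∑ j, act (a1 i) (r1 j) ⊗ₜ[k] act (a2 i) (r2 j)
  counit_act : ∀ (a : J) (r : R), counit (act a r) = D.counit a * counit r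
  /-- the coproduct is `J`-colinear -/
  comul_coact : ∀ (r : R) (p q u : ℕ) (r1 r2 : Fin p → R)
      (aJ : Fin p → Fin q → J) (aV : Fin p → Fin q → R)
      (bJ : Fin p → Fin u → J) (bV : Fin p → Fin u → R)
      (w : ℕ) (rJ : Fin w → J) (rV : Fin w → R),
    comul r = ∑ i, r1 i ⊗ₜ[k] r2 i →
    (∀ i, coact (r1 i) = ∑ j, aJ i j ⊗ₜ[k] aV i j) →
    (∀ i, coact (r2 i) = ∑ t, bJ i t ⊗ₜ[k] bV i t) →
    coact r = ∑ j, rJ j ⊗ₜ[k] rV j →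
    ∑ i, ∑ j, ∑ t, (aJ i j * bJ i t) ⊗ₜ[k] (aV i j ⊗ₜ[k] bV i t)
      = ∑ j, rJ j ⊗ₜ[k] comul (rV j)
  /-- the counit is `J`-colinear -/
  counit_coact : ∀ (r : R) (w : ℕ) (rJ : Fin w → J) (rV : Fin w → R),
    coact r = ∑ j, rJ j ⊗ₜ[k] rV j → ∑ j, counit (rV j) • rJ j = counit r • (1 : J)
  /-- the action preserves the grading -/
  act_grade : ∀ (a : J) {n : ℕ} {r : R}, r ∈ grade n → act a r ∈ grade n
  /-- the coaction preserves the grading -/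
  coact_grade : ∀ {n : ℕ} (r : R), r ∈ grade n → ∃ (p : ℕ) (rJ : Fin p → J) (rV : Fin p → R),
    (∀ i, rV i ∈ grade n) ∧ coact r = ∑ i, rJ i ⊗ₜ[k] rV i
  /-- the coproduct preserves the grading -/
  comul_grade : ∀ {n : ℕ} (r : R), r ∈ grade n → ∃ (p : ℕ) (d e : Fin p → ℕ) (x y : Fin p → R),
    (∀ i, d i + e i = n ∧ x i ∈ grade (d i) ∧ y i ∈ grade (e i)) ∧
      comul r = ∑ i, x i ⊗ₜ[k] y i
  /-- the (braided) antipode of `R` -/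
  antipodeR : R →ₗ[k] R
  antipodeR_conv : ∀ (r : R) (p : ℕ) (r1 r2 : Fin p → R), comul r = ∑ i, r1 i ⊗ₜ[k] r2 i →
    ∑ i, antipodeR (r1 i) * r2 i = counit r • 1
  conv_antipodeR : ∀ (r : R) (p : ℕ) (r1 r2 : Fin p → R), comul r = ∑ i, r1 i ⊗ₜ[k] r2 i →
    ∑ i, r1 i * antipodeR (r2 i) = counit r • 1

variable {J : Type} [Ring J] [Algebra k J] {R : Type} [Ring R] [Algebra k R]

/-- `R` is a pre-Nichols algebra of `V = R(1)` iff it is generated by its degree-one part. -/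
def BGH.IsPreNichols {D : HopfData k J} (B : BGH k J D R) : Prop :=
  Algebra.adjoin k (B.grade 1 : Set R) = ⊤

/-- The set of primitive elements of the braided Hopf algebra `R`. -/
def BGH.primitives {D : HopfData k J} (B : BGH k J D R) : Set R :=
  {r : R | B.comul r = r ⊗ₜ[k] 1 + 1 ⊗ₜ[k] r}

/-- `R` is the Nichols algebra of `V = R(1)` iff it is pre-Nichols and its degree-one
part coincides with the space of primitives. -/
def BGH.IsNichols {D : HopfData k J} (B : BGH k J D R) : Prop :=
  B.IsPreNichols k ∧ (B.grade 1 : Set R) = B.primitives k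

end QB

namespace QB

variable (k : Type) [Field k]
variable {J : Type} [Ring J] [Algebra k J] {R : Type} [Ring R] [Algebra k R]

/-- The bosonization `𝒜 = R ⋊ J` : the (uniquely determined) ordinary Hopf algebra
structure on the vector space `R ⊗ J`, given as data subject to the defining formulas
for the product and coproduct, together with its antipode and pode. -/
structure Boson (D : HopfData k J) (B : BGH k J D R) where
  Amul : (R ⊗[k] J) →ₗ[k] (R ⊗[k] J) →ₗ[k] (R ⊗[k] J)
  Amul_assoc : ∀ x y z, Amul (Amul x y) z = Amul x (Amul y z)
  Amul_one : ∀ x, Amul x ((1 : R) ⊗ₜ[k] (1 : J)) = x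
  one_Amul : ∀ x, Amul ((1 : R) ⊗ₜ[k] (1 : J)) x = x
  Amul_def : ∀ (r s : R) (a b : J) (p : ℕ) (a1 a2 : Fin p → J),
    D.comul a = ∑ i, a1 i ⊗ₜ[k] a2 i →
    Amul (r ⊗ₜ[k] a) (s ⊗ₜ[k] b) = ∑ i, (r * B.act (a1 i) s) ⊗ₜ[k] (a2 i * b)
  Acomul : (R ⊗[k] J) →ₗ[k] (R ⊗[k] J) ⊗[k] (R ⊗[k] J)
  Acomul_def : ∀ (r : R) (a : J) (p q u : ℕ) (r1 r2 : Fin p → R)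
      (rJ : Fin p → Fin q → J) (rV : Fin p → Fin q → R) (aa1 aa2 : Fin u → J),
    B.comul r = ∑ i, r1 i ⊗ₜ[k] r2 i →
    (∀ i, B.coact (r2 i) = ∑ j, rJ i j ⊗ₜ[k] rV i j) →
    D.comul a = ∑ t, aa1 t ⊗ₜ[k] aa2 t →
    Acomul (r ⊗ₜ[k] a)
      = ∑ i, ∑ j, ∑ t, (r1 i ⊗ₜ[k] (rJ i j * aa1 t)) ⊗ₜ[k] (rV i j ⊗ₜ[k] aa2 t)
  Acounit : (R ⊗[k] J) →ₗ[k] k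
  Acounit_def : ∀ (r : R) (a : J), Acounit (r ⊗ₜ[k] a) = B.counit r * D.counit a
  Acoassoc : ∀ x, (TensorProduct.assoc k (R ⊗[k] J) (R ⊗[k] J) (R ⊗[k] J))
      ((Acomul.rTensor (R ⊗[k] J)) (Acomul x)) = (Acomul.lTensor (R ⊗[k] J)) (Acomul x)
  Acounit_comul : ∀ x, (TensorProduct.lid k (R ⊗[k] J)) ((Acounit.rTensor (R ⊗[k] J)) (Acomul x)) = x
  Acomul_counit : ∀ x, (TensorProduct.rid k (R ⊗[k] J)) ((Acounit.lTensor (R ⊗[k] J)) (Acomul x)) = x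
  Santipode : (R ⊗[k] J) →ₗ[k] (R ⊗[k] J)
  Spode : (R ⊗[k] J) →ₗ[k] (R ⊗[k] J)
  antipode_conv : ∀ (x : R ⊗[k] J) (p : ℕ) (x1 x2 : Fin p → R ⊗[k] J),
    Acomul x = ∑ i, x1 i ⊗ₜ[k] x2 i →
    ∑ i, Amul (Santipode (x1 i)) (x2 i) = Acounit x • ((1 : R) ⊗ₜ[k] (1 : J))
  conv_antipode : ∀ (x : R ⊗[k] J) (p : ℕ) (x1 x2 : Fin p → R ⊗[k] J),
    Acomul x = ∑ i, x1 i ⊗ₜ[k] x2 i →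
    ∑ i, Amul (x1 i) (Santipode (x2 i)) = Acounit x • ((1 : R) ⊗ₜ[k] (1 : J))
  pode_antipode : ∀ x, Spode (Santipode x) = x
  antipode_pode : ∀ x, Santipode (Spode x) = x

variable {K S : Type} [Ring K] [Algebra k K] [Ring S] [Algebra k S]

/-- the embedding `R → R ⊗ J`, `r ↦ r ⊗ 1` -/
def incl₁ : R →ₗ[k] R ⊗[k] J := (TensorProduct.mk k R J).flip 1

/-- the embedding `J → R ⊗ J`, `a ↦ 1 ⊗ a` -/
def incl₂ : J →ₗ[k] R ⊗[k] J := TensorProduct.mk k R J 1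

/-- the projection `π : 𝒜 → J` induced by `ε ⊗ id` -/
def proj₂ (B : BGH k J D R) : (R ⊗[k] J) →ₗ[k] J :=
  (TensorProduct.lid k J).toLinearMap ∘ₗ (B.counit.rTensor J)

end QB

namespace QB

variable (k : Type) [Field k]
variable {J : Type} [Ring J] [Algebra k J] {R : Type} [Ring R] [Algebra k R]
variable {K S : Type} [Ring K] [Algebra k K] [Ring S] [Algebra k S]

/-- The standing setup of the paper: Hopf algebras `J`, `K` with bijective antipode,
pre-Nichols algebras `R`, `S` of `V = R(1)`, `W = S(1)` in the Yetter-Drinfeld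
categories over `J`, `K`, their bosonizations `𝒜 = R ⋊ J`, `ℋ = S ⋊ K`, a skew pairing
`τ₀ : J ⊗ K → k` and the (unique) skew pairing `τ : 𝒜 ⊗ ℋ → k` extending `τ₀` with
`τ(J, W) = 0 = τ(V, K)`. -/
structure Setup (J K R S : Type) [Ring J] [Algebra k J] [Ring K] [Algebra k K]
    [Ring R] [Algebra k R] [Ring S] [Algebra k S] where
  DJ : HopfData k J
  DK : HopfData k K
  RB : BGH k J DJ R
  SB : BGH k K DK S
  RB_pre : RB.IsPreNichols k
  SB_pre : SB.IsPreNichols k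
  A : Boson k DJ RB
  H : Boson k DK SB
  τ₀ : J →ₗ[k] K →ₗ[k] k
  τ₀_mul_left : ∀ (a b : J) (x : K) (p : ℕ) (x1 x2 : Fin p → K),
    DK.comul x = ∑ i, x1 i ⊗ₜ[k] x2 i →
    τ₀ (a * b) x = ∑ i, τ₀ a (x1 i) * τ₀ b (x2 i)
  τ₀_mul_right : ∀ (a : J) (x y : K) (p : ℕ) (a1 a2 : Fin p → J),
    DJ.comul a = ∑ i, a1 i ⊗ₜ[k] a2 i →
    τ₀ a (x * y) = ∑ i, τ₀ (a1 i) y * τ₀ (a2 i) x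
  τ₀_one_left : ∀ x : K, τ₀ 1 x = DK.counit x
  τ₀_one_right : ∀ a : J, τ₀ a 1 = DJ.counit a
  τ : (R ⊗[k] J) →ₗ[k] (S ⊗[k] K) →ₗ[k] k
  τ_mul_left : ∀ (x y : R ⊗[k] J) (z : S ⊗[k] K) (p : ℕ) (z1 z2 : Fin p → S ⊗[k] K),
    H.Acomul z = ∑ i, z1 i ⊗ₜ[k] z2 i →
    τ (A.Amul x y) z = ∑ i, τ x (z1 i) * τ y (z2 i)
  τ_mul_right : ∀ (x : R ⊗[k] J) (y z : S ⊗[k] K) (p : ℕ) (x1 x2 : Fin p → R ⊗[k] J),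
    A.Acomul x = ∑ i, x1 i ⊗ₜ[k] x2 i →
    τ x (H.Amul y z) = ∑ i, τ (x1 i) z * τ (x2 i) y
  τ_one_left : ∀ z : S ⊗[k] K, τ ((1 : R) ⊗ₜ[k] (1 : J)) z = H.Acounit z
  τ_one_right : ∀ x : R ⊗[k] J, τ x ((1 : S) ⊗ₜ[k] (1 : K)) = A.Acounit x
  τ_ext : ∀ (a : J) (x : K), τ ((1 : R) ⊗ₜ[k] a) ((1 : S) ⊗ₜ[k] x) = τ₀ a x
  τ_JW : ∀ (a : J) (w : S), w ∈ SB.grade 1 → τ ((1 : R) ⊗ₜ[k] a) (w ⊗ₜ[k] (1 : K)) = 0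
  τ_VK : ∀ (v : R) (x : K), v ∈ RB.grade 1 → τ (v ⊗ₜ[k] (1 : J)) ((1 : S) ⊗ₜ[k] x) = 0

variable {k}

/-- The restriction `τ_{RS} : R ⊗ S → k` of `τ`, as a bilinear form. -/
def Setup.tauRS (St : Setup k J K R S) : R →ₗ[k] S →ₗ[k] k :=
  LinearMap.compl₂ (St.τ ∘ₗ incl₁ k) (incl₁ k)

/-- The action `s ▷ r = τ(r₍₁₎, s) r₍₂₎` of `S` on `R` (formula (3.4)). -/
def Setup.sAct (St : Setup k J K R S) (s : S) : R →ₗ[k] R :=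
  (TensorProduct.lid k R).toLinearMap ∘ₗ
    (LinearMap.rTensor R (St.tauRS.flip s)) ∘ₗ St.RB.comul

/-- The generalized `q`-boson algebra `ℬ`: the (uniquely determined) deformed algebra
structure on `R ⊗ S`, given as data subject to the defining relations (3.2), (3.3). -/
structure QBosonAlg (St : Setup k J K R S) where
  Bmul : (R ⊗[k] S) →ₗ[k] (R ⊗[k] S) →ₗ[k] (R ⊗[k] S)
  Bmul_assoc : ∀ x y z, Bmul (Bmul x y) z = Bmul x (Bmul y z)
  Bmul_one : ∀ x, Bmul x ((1 : R) ⊗ₜ[k] (1 : S)) = x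
  one_Bmul : ∀ x, Bmul ((1 : R) ⊗ₜ[k] (1 : S)) x = x
  mul_rr : ∀ r r' : R, Bmul (r ⊗ₜ[k] (1 : S)) (r' ⊗ₜ[k] (1 : S)) = (r * r') ⊗ₜ[k] (1 : S)
  mul_ss : ∀ s s' : S, Bmul ((1 : R) ⊗ₜ[k] s) ((1 : R) ⊗ₜ[k] s') = (1 : R) ⊗ₜ[k] (s * s')
  mul_rs : ∀ (r : R) (s : S), Bmul (r ⊗ₜ[k] (1 : S)) ((1 : R) ⊗ₜ[k] s) = r ⊗ₜ[k] s
  mul_wv : ∀ (v : R) (w : S), v ∈ St.RB.grade 1 → w ∈ St.SB.grade 1 →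
    ∀ (p q : ℕ) (vJ : Fin p → J) (vV : Fin p → R) (wK : Fin q → K) (wW : Fin q → S),
    St.RB.coact v = ∑ i, vJ i ⊗ₜ[k] vV i →
    St.SB.coact w = ∑ j, wK j ⊗ₜ[k] wW j →
    Bmul ((1 : R) ⊗ₜ[k] w) (v ⊗ₜ[k] (1 : S))
      = (∑ i, ∑ j, St.τ₀ (vJ i) (wK j) • (vV i ⊗ₜ[k] wW j))
        + St.τ (v ⊗ₜ[k] (1 : J)) (w ⊗ₜ[k] (1 : K)) • ((1 : R) ⊗ₜ[k] (1 : S))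

/-- Non-degeneracy of a bilinear form. -/
def Nondeg {M N : Type} [AddCommGroup M] [Module k M] [AddCommGroup N] [Module k N]
    (φ : M →ₗ[k] N →ₗ[k] k) : Prop :=
  (∀ m : M, (∀ n : N, φ m n = 0) → m = 0) ∧ (∀ n : N, (∀ m : M, φ m n = 0) → n = 0)

end QB

namespace QB

variable {k : Type} [Field k]

section Helpers

variable {M N P : Type} [AddCommGroup M] [Module k M] [AddCommGroup N] [Module k N]
  [AddCommGroup P] [Module k P]

lemma exists_fin_rep (ξ : M ⊗[k] N) : ∃ (p : ℕ) (x : Fin p → M) (y : Fin p → N),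
    ξ = ∑ i, x i ⊗ₜ[k] y i := by
  induction ξ using TensorProduct.induction_on with
  | zero => exact ⟨0, ![], ![], by simp⟩
  | tmul m n => exact ⟨1, ![m], ![n], by simp⟩
  | add a b ha hb =>
    obtain ⟨p, x, y, rfl⟩ := ha; obtain ⟨q, x', y', rfl⟩ := hb
    refine ⟨p + q, Fin.append x x', Fin.append y y', ?_⟩
    rw [Fin.sum_univ_add]
    simp [Fin.append_left, Fin.append_right]

lemma exists_basis_rep {ι : Type} [DecidableEq ι] (b : Module.Basis ι k N) (ξ : M ⊗[k] N) :
    ∃ (s : Finset ι) (v : ι → M), (∀ j ∉ s, v j = 0) ∧ ξ = ∑ j ∈ s, v j ⊗ₜ[k] b j := by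
  induction ξ using TensorProduct.induction_on with
  | zero => exact ⟨∅, 0, fun _ _ => rfl, by simp⟩
  | tmul m n =>
    refine ⟨(b.repr n).support, fun j => (b.repr n) j • m,
      fun j hj => by simp [Finsupp.notMem_support_iff.mp hj], ?_⟩
    have hn : n = ∑ j ∈ (b.repr n).support, (b.repr n) j • b j := by
      conv_lhs => rw [← b.linearCombination_repr n]
      rw [Finsupp.linearCombination_apply, Finsupp.sum]
    conv_lhs => rw [hn]
    rw [tmul_sum]
    exact Finset.sum_congr rfl fun j hj => by
      rw [tmul_smul, TensorProduct.smul_tmul']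
  | add a c ha hc =>
    obtain ⟨s, v, hv0, rfl⟩ := ha; obtain ⟨t, u, hu0, rfl⟩ := hc
    refine ⟨s ∪ t, v + u, fun j hj => ?_, ?_⟩
    · simp only [Finset.mem_union, not_or] at hj
      simp [hv0 j hj.1, hu0 j hj.2]
    · have h1 : ∑ j ∈ s, v j ⊗ₜ[k] b j = ∑ j ∈ s ∪ t, v j ⊗ₜ[k] b j :=
        Finset.sum_subset Finset.subset_union_left (fun j _ hj => by simp [hv0 j hj])
      have h2 : ∑ j ∈ t, u j ⊗ₜ[k] b j = ∑ j ∈ s ∪ t, u j ⊗ₜ[k] b j :=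
        Finset.sum_subset Finset.subset_union_right (fun j _ hj => by simp [hu0 j hj])
      rw [h1, h2, ← Finset.sum_add_distrib]
      simp [add_tmul]

lemma basis_rep_cancel {ι : Type} (b : Module.Basis ι k N) (s : Finset ι) (v : ι → M)
    (h : ∑ j ∈ s, v j ⊗ₜ[k] b j = 0) : ∀ j ∈ s, v j = 0 := by
  intro j hj
  have := congrArg (fun ξ => (TensorProduct.rid k M) ((LinearMap.lTensor M (b.coord j)) ξ)) h
  simp only [map_sum, LinearMap.lTensor_tmul, map_zero] at this
  rw [← this]
  rw [Finset.sum_eq_single j]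
  · simp
  · intro i _ hij
    simp [Module.Basis.coord_apply, Module.Basis.repr_self, Finsupp.single_apply, hij]
  · intro h; exact absurd hj h

lemma scalar_combo_cancel {ι : Type} {b : ι → N} (hb : LinearIndependent k b) (s : Finset ι)
    (c : ι → k) (h : ∑ j ∈ s, c j • b j = 0) : ∀ j ∈ s, c j = 0 := by
  exact fun j hj => linearIndependent_iff'.mp hb s c h j hj

end Helpers

section Proj

variable {M : Type} [AddCommGroup M] [Module k M] {A : ℕ → Submodule k M}

/-- projection onto the `n`-th component of an internal direct sum -/
def projMap (h : DirectSum.IsInternal A) (n : ℕ) : M →ₗ[k] M :=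
  (A n).subtype ∘ₗ (DirectSum.component k ℕ (fun i => A i) n) ∘ₗ
    (LinearEquiv.ofBijective (DirectSum.coeLinearMap A) h).symm.toLinearMap

lemma projMap_mem (h : DirectSum.IsInternal A) (n : ℕ) (x : M) : projMap h n x ∈ A n := by
  simp only [projMap, LinearMap.coe_comp, Function.comp_apply, Submodule.coe_subtype]
  exact Subtype.coe_prop _

lemma projMap_of (h : DirectSum.IsInternal A) (n m : ℕ) {x : M} (hx : x ∈ A m) :
    projMap h n x = if m = n then x else 0 := by
  have hr : projMap h n x
      = ((LinearEquiv.ofBijective (DirectSum.coeLinearMap A) h).symm x n : M) := rfl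
  rw [hr]
  split_ifs with h1
  · subst h1; rw [h.ofBijective_coeLinearMap_of_mem hx]
  · rw [h.ofBijective_coeLinearMap_of_mem_ne h1 hx, Submodule.coe_zero]

lemma projMap_eq_self (h : DirectSum.IsInternal A) {n : ℕ} {x : M} (hx : x ∈ A n) :
    projMap h n x = x := by rw [projMap_of h n n hx, if_pos rfl]

lemma projMap_eq_zero (h : DirectSum.IsInternal A) {n m : ℕ} (hmn : m ≠ n) {x : M}
    (hx : x ∈ A m) : projMap h n x = 0 := by rw [projMap_of h n m hx, if_neg hmn]

lemma grade_disjoint (h : DirectSum.IsInternal A) {n m : ℕ} (hmn : m ≠ n) {x : M}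
    (hx : x ∈ A m) (hx' : x ∈ A n) : x = 0 := by
  rw [← projMap_eq_self h hx']; exact projMap_eq_zero h hmn hx

lemma projMap_finsum (h : DirectSum.IsInternal A) (x : M) :
    ∃ s : Finset ℕ, (∀ n ∉ s, projMap h n x = 0) ∧ ∑ n ∈ s, projMap h n x = x := by
  have hx : x ∈ ⨆ n, A n := by rw [h.submodule_iSup_eq_top]; trivial
  refine Submodule.iSup_induction (motive := fun x => ∃ s : Finset ℕ,
    (∀ n ∉ s, projMap h n x = 0) ∧ ∑ n ∈ s, projMap h n x = x) A hx ?_ ⟨∅, by simp, by simp⟩ ?_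
  · intro m x hx
    exact ⟨{m}, fun n hn => projMap_eq_zero h (Ne.symm (by simpa using hn)) hx,
      by simp [projMap_eq_self h hx]⟩
  · intro x y hx hy
    obtain ⟨s, hs0, hs⟩ := hx; obtain ⟨t, ht0, ht⟩ := hy
    refine ⟨s ∪ t, fun n hn => ?_, ?_⟩

    · simp only [Finset.mem_union, not_or] at hn
      rw [map_add, hs0 n hn.1, ht0 n hn.2, add_zero]
    · have h1 : ∑ n ∈ s, projMap h n x = ∑ n ∈ s ∪ t, projMap h n x :=
        Finset.sum_subset Finset.subset_union_left (fun n _ hn => hs0 n hn)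
      have h2 : ∑ n ∈ t, projMap h n y = ∑ n ∈ s ∪ t, projMap h n y :=
        Finset.sum_subset Finset.subset_union_right (fun n _ hn => ht0 n hn)
      simp only [map_add, Finset.sum_add_distrib, ← h1, ← h2, hs, ht]

lemma ext_of_grades {P : Type} [AddCommGroup P] [Module k P] (h : DirectSum.IsInternal A)
    {f g : M →ₗ[k] P} (hfg : ∀ n, ∀ x ∈ A n, f x = g x) : f = g := by
  ext x
  have hx : x ∈ ⨆ n, A n := by rw [h.submodule_iSup_eq_top]; trivial
  refine Submodule.iSup_induction (motive := fun x => f x = g x) A hx hfg (by simp) ?_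
  intro x y hx hy; rw [map_add, map_add, hx, hy]

end Proj


section MapComm

variable {M N M' N' : Type} [AddCommGroup M] [Module k M] [AddCommGroup N] [Module k N]
  [AddCommGroup M'] [Module k M'] [AddCommGroup N'] [Module k N']

lemma lTensor_rTensor_comm (f : M →ₗ[k] M') (g : N →ₗ[k] N') (X : M ⊗[k] N) :
    (LinearMap.lTensor M' g) ((LinearMap.rTensor N f) X)
      = (LinearMap.rTensor N' f) ((LinearMap.lTensor M g) X) := by
  induction X using TensorProduct.induction_on with
  | zero => simp
  | tmul m n => simp
  | add a b ha hb => simp [ha, hb]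

end MapComm

section AssocHelper

variable {M N P : Type} [AddCommGroup M] [Module k M] [AddCommGroup N] [Module k N]
  [AddCommGroup P] [Module k P]

lemma assoc_rTensor_rTensor (f : M →ₗ[k] M) (X : (M ⊗[k] N) ⊗[k] P) :
    TensorProduct.assoc k M N P (((f.rTensor N).rTensor P) X)
      = (f.rTensor (N ⊗[k] P)) (TensorProduct.assoc k M N P X) := by
  induction X using TensorProduct.induction_on with
  | zero => simp
  | tmul a c =>
    induction a using TensorProduct.induction_on with
    | zero => simp
    | tmul m n => simp
    | add a b ha hb => rw [add_tmul, map_add, map_add, ha, hb, map_add, map_add]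
  | add a b ha hb => simp [ha, hb]

end AssocHelper

end QB

namespace QB

variable {k : Type} [Field k]
variable {J : Type} [Ring J] [Algebra k J] {R : Type} [Ring R] [Algebra k R]
variable {D : HopfData k J}

lemma BGH.one_ne_zero' (B : BGH k J D R) : (1 : R) ≠ 0 := by
  intro h
  have := B.counit_one
  rw [h, map_zero] at this
  exact one_ne_zero this.symm

/-- counit-on-the-left law, on an explicit decomposition of the coproduct -/
lemma BGH.counit_comul' (B : BGH k J D R) (r : R) {p : ℕ} {r1 r2 : Fin p → R}
    (h : B.comul r = ∑ i, r1 i ⊗ₜ[k] r2 i) : ∑ i, B.counit (r1 i) • r2 i = r := by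
  have := B.counit_comul r
  rw [h, map_sum, map_sum] at this
  simpa using this

/-- counit-on-the-right law, on an explicit decomposition of the coproduct -/
lemma BGH.comul_counit' (B : BGH k J D R) (r : R) {p : ℕ} {r1 r2 : Fin p → R}
    (h : B.comul r = ∑ i, r1 i ⊗ₜ[k] r2 i) : ∑ i, B.counit (r2 i) • r1 i = r := by
  have := B.comul_counit r
  rw [h, map_sum, map_sum] at this
  simpa using this

lemma HopfData.comul_counit' (D : HopfData k J) (a : J) {p : ℕ} {a1 a2 : Fin p → J}
    (h : D.comul a = ∑ i, a1 i ⊗ₜ[k] a2 i) : ∑ i, D.counit (a2 i) • a1 i = a := by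
  have := D.comul_counit a
  rw [h, map_sum, map_sum] at this
  simpa using this

lemma BGH.grade0_eq (B : BGH k J D R) {x : R} (hx : x ∈ B.grade 0) :
    x = B.counit x • 1 := by
  rw [B.grade0, Submodule.mem_span_singleton] at hx
  obtain ⟨c, rfl⟩ := hx
  rw [map_smul, B.counit_one, smul_eq_mul, mul_one]

/-- every degree-one element of a graded braided Hopf algebra with `R(0) = k` is primitive -/
lemma BGH.primitive_of_grade_one (B : BGH k J D R) {w : R} (hw : w ∈ B.grade 1) :
    B.comul w = w ⊗ₜ[k] 1 + 1 ⊗ₜ[k] w := by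
  obtain ⟨p, d, e, x, y, hg, hc⟩ := B.comul_grade w hw
  have key : ∀ i, ∃ a b : R, a ∈ B.grade 1 ∧ b ∈ B.grade 1 ∧
      x i ⊗ₜ[k] y i = 1 ⊗ₜ[k] a + b ⊗ₜ[k] 1 := by
    intro i
    obtain ⟨hde, hx, hy⟩ := hg i
    by_cases hd : d i = 0
    · have he : e i = 1 := by omega
      rw [hd] at hx
      rw [B.grade0, Submodule.mem_span_singleton] at hx
      obtain ⟨c, hcx⟩ := hx
      refine ⟨c • y i, 0, Submodule.smul_mem _ _ (he ▸ hy), Submodule.zero_mem _, ?_⟩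
      rw [← hcx, zero_tmul, add_zero, TensorProduct.smul_tmul, tmul_smul]
    · have hd1 : d i = 1 := by omega
      have he : e i = 0 := by omega
      rw [he] at hy
      rw [B.grade0, Submodule.mem_span_singleton] at hy
      obtain ⟨c, hcy⟩ := hy
      refine ⟨0, c • x i, Submodule.zero_mem _, Submodule.smul_mem _ _ (hd1 ▸ hx), ?_⟩
      rw [← hcy, tmul_zero, zero_add, tmul_smul, TensorProduct.smul_tmul']
  choose a b ha hb hab using key
  have hA : ∑ i, a i ∈ B.grade 1 := Submodule.sum_mem _ fun i _ => ha i
  have hB : ∑ i, b i ∈ B.grade 1 := Submodule.sum_mem _ fun i _ => hb i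
  have hcm : B.comul w = 1 ⊗ₜ[k] (∑ i, a i) + (∑ i, b i) ⊗ₜ[k] 1 := by
    rw [hc, tmul_sum, sum_tmul, ← Finset.sum_add_distrib]
    exact Finset.sum_congr rfl fun i _ => hab i
  have h1 : (∑ i, a i) + B.counit (∑ i, b i) • 1 = w := by
    have := B.counit_comul w
    rw [hcm, map_add, map_add] at this
    simpa [B.counit_one, TensorProduct.smul_tmul'] using this
  have h2 : B.counit (∑ i, a i) • 1 + (∑ i, b i) = w := by
    have := B.comul_counit w
    rw [hcm, map_add, map_add] at this
    simpa [B.counit_one] using this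
  have hd1 : w - ∑ i, a i = B.counit (∑ i, b i) • 1 := by
    rw [← h1]; abel
  have hz1 : w - ∑ i, a i = 0 := by
    refine grade_disjoint B.internal (by norm_num : (0:ℕ) ≠ 1) ?_ ?_
    · rw [hd1]; exact Submodule.smul_mem _ _ B.one_grade
    · exact Submodule.sub_mem _ hw hA
  have hArw : ∑ i, a i = w := by
    have := sub_eq_zero.mp hz1; exact this.symm
  have hd2 : w - ∑ i, b i = B.counit (∑ i, a i) • 1 := by
    rw [← h2]; abel
  have hz2 : w - ∑ i, b i = 0 := by
    refine grade_disjoint B.internal (by norm_num : (0:ℕ) ≠ 1) ?_ ?_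
    · rw [hd2]; exact Submodule.smul_mem _ _ B.one_grade
    · exact Submodule.sub_mem _ hw hB
  have hBrw : ∑ i, b i = w := (sub_eq_zero.mp hz2).symm
  rw [hcm, hArw, hBrw, add_comm]

lemma BGH.counit_grade_one (B : BGH k J D R) {w : R} (hw : w ∈ B.grade 1) :
    B.counit w = 0 := by
  have hp := B.primitive_of_grade_one hw
  have := B.counit_comul w
  rw [hp, map_add, map_add] at this
  simp only [LinearMap.rTensor_tmul, TensorProduct.lid_tmul, B.counit_one, one_smul] at this
  have h0 : B.counit w • (1:R) = 0 := by
    have : B.counit w • (1:R) + w = w := this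
    linear_combination (norm := abel) this
  rcases smul_eq_zero.mp h0 with h | h
  · exact h
  · exact absurd h B.one_ne_zero'

/-- the span of the (ordered) monomials of length `l` in elements of `R(1)` -/
def BGH.monoSp (B : BGH k J D R) : ℕ → Submodule k R
  | 0 => Submodule.span k {(1 : R)}
  | (l+1) => Submodule.span k {z | ∃ v ∈ B.grade 1, ∃ y ∈ BGH.monoSp B l, z = v * y}

lemma BGH.monoSp_le_grade (B : BGH k J D R) : ∀ l, B.monoSp l ≤ B.grade l := by
  intro l
  induction l with
  | zero => rw [BGH.monoSp, ← B.grade0]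
  | succ l ih =>
    rw [BGH.monoSp, Submodule.span_le]
    rintro z ⟨v, hv, y, hy, rfl⟩
    have := B.mul_grade hv (ih hy)
    simpa [Nat.add_comm] using this

lemma BGH.mem_iSup_monoSp (B : BGH k J D R) (hpre : B.IsPreNichols k) (x : R) :
    x ∈ ⨆ l, B.monoSp l := by
  have htop : Submodule.span k ((Submonoid.closure (B.grade 1 : Set R) : Submonoid R) : Set R) = ⊤ := by
    have := congrArg Subalgebra.toSubmodule hpre
    rw [Algebra.adjoin_eq_span] at this
    simpa using this
  have hx : x ∈ Submodule.span k ((Submonoid.closure (B.grade 1 : Set R) : Submonoid R) : Set R) := by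
    rw [htop]; trivial
  refine Submodule.span_le.mpr ?_ hx
  intro z hz
  have hz' : z ∈ Submonoid.closure (B.grade 1 : Set R) := hz
  show z ∈ (⨆ l, B.monoSp l)
  refine Submonoid.closure_induction_left (motive := fun z _ => z ∈ ⨆ l, B.monoSp l) ?_ ?_ hz'
  · exact Submodule.mem_iSup_of_mem 0 (Submodule.mem_span_singleton_self 1)
  · intro v hv y _ ihy
    refine Submodule.iSup_induction (motive := fun y => v * y ∈ ⨆ l, B.monoSp l) _ ihy ?_ ?_ ?_
    · intro l y hyl
      exact Submodule.mem_iSup_of_mem (l+1) (Submodule.subset_span ⟨v, hv, y, hyl, rfl⟩)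
    · simpa using Submodule.zero_mem (⨆ l, B.monoSp l)
    · intro y1 y2 h1 h2
      rw [mul_add]; exact Submodule.add_mem _ h1 h2

lemma BGH.grade_eq_monoSp (B : BGH k J D R) (hpre : B.IsPreNichols k) (n : ℕ) :
    B.grade n = B.monoSp n := by
  refine le_antisymm ?_ (B.monoSp_le_grade n)
  intro x hx
  have hxs := B.mem_iSup_monoSp hpre x
  have key : projMap B.internal n x ∈ B.monoSp n := by
    refine Submodule.iSup_induction
      (motive := fun x => projMap B.internal n x ∈ B.monoSp n) _ hxs ?_ (by simp) ?_
    · intro l y hy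
      rw [projMap_of B.internal n l (B.monoSp_le_grade l hy)]
      split_ifs with h
      · exact h ▸ hy
      · exact Submodule.zero_mem _
    · intro y z h1 h2
      rw [map_add]; exact Submodule.add_mem _ h1 h2
  rwa [projMap_eq_self B.internal hx] at key

lemma BGH.counit_grade_pos (B : BGH k J D R) (hpre : B.IsPreNichols k) {n : ℕ} (hn : 1 ≤ n)
    {x : R} (hx : x ∈ B.grade n) : B.counit x = 0 := by
  obtain ⟨l, rfl⟩ : ∃ l, n = l + 1 := ⟨n-1, by omega⟩
  rw [B.grade_eq_monoSp hpre] at hx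
  rw [show B.monoSp (l+1)
      = Submodule.span k {z | ∃ v ∈ B.grade 1, ∃ y ∈ B.monoSp l, z = v * y} from rfl] at hx
  refine Submodule.span_induction ?_ (map_zero _) ?_ ?_ hx
  · rintro z ⟨v, hv, y, hy, rfl⟩
    rw [B.counit_mul, B.counit_grade_one hv, zero_mul]
  · intro x y _ _ h1 h2; rw [map_add, h1, h2, add_zero]
  · intro a x _ h1; rw [map_smul, h1, smul_zero]

/-- decomposition of positive-degree elements into products `v * y` -/
lemma BGH.grade_pos_span (B : BGH k J D R) (hpre : B.IsPreNichols k) {n : ℕ}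
    {x : R} (hx : x ∈ B.grade (n+1)) :
    x ∈ Submodule.span k {z | ∃ v ∈ B.grade 1, ∃ y ∈ B.grade n, z = v * y} := by
  rw [B.grade_eq_monoSp hpre] at hx
  rw [show B.monoSp (n+1)
      = Submodule.span k {z | ∃ v ∈ B.grade 1, ∃ y ∈ B.monoSp n, z = v * y} from rfl] at hx
  refine Submodule.span_le.mpr ?_ hx
  rintro z ⟨v, hv, y, hy, rfl⟩
  exact Submodule.subset_span ⟨v, hv, y, B.monoSp_le_grade n hy, rfl⟩

end QB

namespace QB

variable {k : Type} [Field k]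
variable {J : Type} [Ring J] [Algebra k J] {R : Type} [Ring R] [Algebra k R]
variable {K S : Type} [Ring K] [Algebra k K] [Ring S] [Algebra k S]
variable (St : Setup k J K R S)

lemma Amul_rr (r s : R) :
    St.A.Amul (r ⊗ₜ[k] (1:J)) (s ⊗ₜ[k] (1:J)) = (r * s) ⊗ₜ[k] (1:J) := by
  have := St.A.Amul_def r s 1 1 1 ![1] ![1] (by simp [St.DJ.comul_one])
  simpa [St.RB.act_one] using this

lemma Amul_rb (r : R) (b : J) :
    St.A.Amul (r ⊗ₜ[k] (1:J)) ((1:R) ⊗ₜ[k] b) = r ⊗ₜ[k] b := by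
  have := St.A.Amul_def r 1 1 b 1 ![1] ![1] (by simp [St.DJ.comul_one])
  simpa [St.RB.act_one] using this

lemma Amul_ab (a : J) (x : R) {p : ℕ} (a1 a2 : Fin p → J)
    (h : St.DJ.comul a = ∑ i, a1 i ⊗ₜ[k] a2 i) :
    St.A.Amul ((1:R) ⊗ₜ[k] a) (x ⊗ₜ[k] (1:J)) = ∑ i, (St.RB.act (a1 i) x) ⊗ₜ[k] a2 i := by
  have := St.A.Amul_def 1 x a 1 p a1 a2 h
  simpa using this

lemma tauRS_apply (r : R) (s : S) :
    St.tauRS r s = St.τ (r ⊗ₜ[k] (1:J)) (s ⊗ₜ[k] (1:K)) := rfl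

section WDec

variable {w : S} (hw : w ∈ St.SB.grade 1) {q : ℕ} {wK : Fin q → K} {wW : Fin q → S}
  (hcw : St.SB.coact w = ∑ j, wK j ⊗ₜ[k] wW j)

include hw hcw in
lemma Acomul_w1 :
    St.H.Acomul (w ⊗ₜ[k] (1:K))
      = ∑ t : Fin (q+1),
          (Fin.cases (w ⊗ₜ[k] (1:K)) (fun j => (1:S) ⊗ₜ[k] wK j) t) ⊗ₜ[k]
          (Fin.cases ((1:S) ⊗ₜ[k] (1:K)) (fun j => wW j ⊗ₜ[k] (1:K)) t) := by
  have hprim := St.SB.primitive_of_grade_one hw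
  have h1 : St.SB.comul w = ∑ i : Fin 2, (![w, 1] : Fin 2 → S) i ⊗ₜ[k] (![1, w] : Fin 2 → S) i := by
    rw [hprim, Fin.sum_univ_two]
    simp
  have h2 : ∀ i : Fin 2, St.SB.coact ((![1, w] : Fin 2 → S) i)
      = ∑ j : Fin (q+1),
          (![Fin.cases 1 (fun _ => 0), Fin.cases 0 wK] : Fin 2 → Fin (q+1) → K) i j ⊗ₜ[k]
          (![Fin.cases 1 (fun _ => 0), Fin.cases 0 wW] : Fin 2 → Fin (q+1) → S) i j := by
    intro i
    fin_cases i
    · rw [Fin.sum_univ_succ]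
      simpa using St.SB.coact_one
    · rw [Fin.sum_univ_succ]
      simpa using hcw
  have h3 : St.DK.comul 1 = ∑ _t : Fin 1, (1:K) ⊗ₜ[k] (1:K) := by simp [St.DK.comul_one]
  have := St.H.Acomul_def w 1 2 (q+1) 1 _ _ _ _ _ _ h1 h2 h3
  rw [this, Fin.sum_univ_two, Fin.sum_univ_succ, Fin.sum_univ_succ]
  simp [Fin.sum_univ_succ]

include hw hcw in
lemma tau_mul_w (x y : R ⊗[k] J) :
    St.τ (St.A.Amul x y) (w ⊗ₜ[k] (1:K))
      = St.τ x (w ⊗ₜ[k] (1:K)) * St.τ y ((1:S) ⊗ₜ[k] (1:K))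
        + ∑ j, St.τ x ((1:S) ⊗ₜ[k] wK j) * St.τ y (wW j ⊗ₜ[k] (1:K)) := by
  have := St.τ_mul_left x y (w ⊗ₜ[k] (1:K)) (q+1) _ _ (Acomul_w1 St hw hcw)
  rw [this, Fin.sum_univ_succ]
  simp

variable (hwW : ∀ j, wW j ∈ St.SB.grade 1)

include hw hcw hwW in
lemma tau_rb (r : R) (b : J) :
    St.τ (r ⊗ₜ[k] b) (w ⊗ₜ[k] (1:K))
      = St.DJ.counit b * St.τ (r ⊗ₜ[k] (1:J)) (w ⊗ₜ[k] (1:K)) := by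
  rw [← Amul_rb St r b, tau_mul_w St hw hcw]
  have h1 : St.τ ((1:R) ⊗ₜ[k] b) ((1:S) ⊗ₜ[k] (1:K)) = St.DJ.counit b := by
    rw [St.τ_ext, St.τ₀_one_right]
  have h2 : ∀ j, St.τ ((1:R) ⊗ₜ[k] b) (wW j ⊗ₜ[k] (1:K)) = 0 :=
    fun j => St.τ_JW b (wW j) (hwW j)
  simp [h1, h2, mul_comm]

include hw hcw hwW in
lemma tau_mul_v {v : R} (hv : v ∈ St.RB.grade 1) (y : R) :
    St.τ ((v * y) ⊗ₜ[k] (1:J)) (w ⊗ₜ[k] (1:K))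
      = St.τ (v ⊗ₜ[k] (1:J)) (w ⊗ₜ[k] (1:K)) * St.RB.counit y := by
  rw [← Amul_rr St v y, tau_mul_w St hw hcw]
  have h1 : St.τ (y ⊗ₜ[k] (1:J)) ((1:S) ⊗ₜ[k] (1:K)) = St.RB.counit y := by
    rw [St.τ_one_right, St.A.Acounit_def, St.DJ.counit_one, mul_one]
  have h2 : ∀ j, St.τ (v ⊗ₜ[k] (1:J)) ((1:S) ⊗ₜ[k] wK j) = 0 :=
    fun j => St.τ_VK v (wK j) hv
  simp [h1, h2]

include hw hcw hwW in
lemma tau_act (a : J) (x : R) :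
    St.τ ((St.RB.act a x) ⊗ₜ[k] (1:J)) (w ⊗ₜ[k] (1:K))
      = ∑ j, St.τ₀ a (wK j) * St.τ (x ⊗ₜ[k] (1:J)) (wW j ⊗ₜ[k] (1:K)) := by
  obtain ⟨p, a1, a2, ha⟩ := exists_fin_rep (St.DJ.comul a)
  have hAm := Amul_ab St a x a1 a2 ha
  have h1 := tau_mul_w St hw hcw ((1:R) ⊗ₜ[k] a) (x ⊗ₜ[k] (1:J))
  have h2 : St.τ ((1:R) ⊗ₜ[k] a) (w ⊗ₜ[k] (1:K)) = 0 := St.τ_JW a w hw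
  have h3 : ∀ j, St.τ ((1:R) ⊗ₜ[k] a) ((1:S) ⊗ₜ[k] wK j) = St.τ₀ a (wK j) :=
    fun j => St.τ_ext a (wK j)
  have h4 : St.τ (St.A.Amul ((1:R) ⊗ₜ[k] a) (x ⊗ₜ[k] (1:J))) (w ⊗ₜ[k] (1:K))
      = ∑ j, St.τ₀ a (wK j) * St.τ (x ⊗ₜ[k] (1:J)) (wW j ⊗ₜ[k] (1:K)) := by
    rw [h1, h2]
    simp [h3]
  rw [hAm] at h4
  rw [map_sum, LinearMap.sum_apply] at h4
  have h5 : ∀ i, St.τ ((St.RB.act (a1 i) x) ⊗ₜ[k] (a2 i)) (w ⊗ₜ[k] (1:K))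
      = St.DJ.counit (a2 i) * St.τ ((St.RB.act (a1 i) x) ⊗ₜ[k] (1:J)) (w ⊗ₜ[k] (1:K)) :=
    fun i => tau_rb St hw hcw hwW _ _
  rw [Finset.sum_congr rfl (fun i _ => h5 i)] at h4
  have h6 : ∑ i, St.DJ.counit (a2 i) * St.τ ((St.RB.act (a1 i) x) ⊗ₜ[k] (1:J)) (w ⊗ₜ[k] (1:K))
      = St.τ ((St.RB.act a x) ⊗ₜ[k] (1:J)) (w ⊗ₜ[k] (1:K)) := by
    have hco := St.DJ.comul_counit' a ha
    have hact : St.RB.act a x = ∑ i, St.DJ.counit (a2 i) • (St.RB.act (a1 i) x) := by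
      conv_lhs => rw [← hco]
      rw [map_sum, LinearMap.sum_apply]
      refine Finset.sum_congr rfl fun i _ => ?_
      rw [map_smul, LinearMap.smul_apply]
    rw [hact, sum_tmul, map_sum, LinearMap.sum_apply]
    refine Finset.sum_congr rfl fun i _ => ?_
    rw [← TensorProduct.smul_tmul', map_smul, LinearMap.smul_apply, smul_eq_mul]
  rw [h6] at h4
  exact h4

end WDec

lemma tau_one_w {w : S} (hw : w ∈ St.SB.grade 1) :
    St.τ ((1:R) ⊗ₜ[k] (1:J)) (w ⊗ₜ[k] (1:K)) = 0 := by
  rw [St.τ_one_left, St.H.Acounit_def, St.SB.counit_grade_one hw, zero_mul]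

/-- orthogonality : `τ(x ⊗ 1, w ⊗ 1) = 0` for homogeneous `x` of degree `≠ 1`. -/
lemma tau_grade_ne_one {m : ℕ} (hm : m ≠ 1) {x : R} (hx : x ∈ St.RB.grade m)
    {w : S} (hw : w ∈ St.SB.grade 1) :
    St.τ (x ⊗ₜ[k] (1:J)) (w ⊗ₜ[k] (1:K)) = 0 := by
  obtain ⟨q, wK, wW, hwW, hcw⟩ := St.SB.coact_grade w hw
  match m, hm with
  | 0, _ =>
    rw [St.RB.grade0_eq hx, ← TensorProduct.smul_tmul', map_smul, LinearMap.smul_apply,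
      tau_one_w St hw, smul_zero]
  | (l+2), _ =>
    have hsp := St.RB.grade_pos_span (St.RB_pre) hx
    refine Submodule.span_induction ?_ (by simp) ?_ ?_ hsp
    · rintro z ⟨v, hv, y, hy, rfl⟩
      rw [tau_mul_v St hw hcw hwW hv y, St.RB.counit_grade_pos St.RB_pre (by omega) hy, mul_zero]
    · intro x y _ _ h1 h2
      rw [add_tmul, map_add, LinearMap.add_apply, h1, h2, add_zero]
    · intro c x _ h1
      rw [← TensorProduct.smul_tmul', map_smul, LinearMap.smul_apply, h1, smul_zero]

lemma sAct_apply (s : S) (r : R) {p : ℕ} {r1 r2 : Fin p → R}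
    (h : St.RB.comul r = ∑ i, r1 i ⊗ₜ[k] r2 i) :
    St.sAct s r = ∑ i, St.τ (r1 i ⊗ₜ[k] (1:J)) (s ⊗ₜ[k] (1:K)) • r2 i := by
  show (TensorProduct.lid k R) ((LinearMap.rTensor R (St.tauRS.flip s)) (St.RB.comul r)) = _
  rw [h, map_sum, map_sum]
  rfl

lemma sAct_one_left {w : S} (hw : w ∈ St.SB.grade 1) : St.sAct w 1 = 0 := by
  have h1 : St.RB.comul 1 = ∑ _i : Fin 1, (1:R) ⊗ₜ[k] (1:R) := by simp [St.RB.comul_one]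
  rw [sAct_apply St w 1 h1]
  simp [tau_one_w St hw]

lemma sAct_grade0 {w : S} (hw : w ∈ St.SB.grade 1) {x : R} (hx : x ∈ St.RB.grade 0) :
    St.sAct w x = 0 := by
  rw [St.RB.grade0_eq hx, map_smul, sAct_one_left St hw, smul_zero]

lemma sAct_grade {w : S} (hw : w ∈ St.SB.grade 1) {m : ℕ} {x : R} (hx : x ∈ St.RB.grade m) :
    St.sAct w x ∈ St.RB.grade (m - 1) := by
  match m with
  | 0 => rw [sAct_grade0 St hw hx]; exact Submodule.zero_mem _
  | (l+1) =>
    obtain ⟨p, d, e, xx, yy, hg, hc⟩ := St.RB.comul_grade x hx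
    rw [sAct_apply St w x hc]
    refine Submodule.sum_mem _ fun i _ => ?_
    by_cases hd : d i = 1
    · have he : e i = l := by have := (hg i).1; omega
      exact Submodule.smul_mem _ _ (by simpa [he] using (hg i).2.2)
    · rw [tau_grade_ne_one St hd (hg i).2.1 hw, zero_smul]
      exact Submodule.zero_mem _

lemma tau_w_pi1 {w : S} (hw : w ∈ St.SB.grade 1) (x : R) :
    St.τ ((projMap St.RB.internal 1 x) ⊗ₜ[k] (1:J)) (w ⊗ₜ[k] (1:K))
      = St.τ (x ⊗ₜ[k] (1:J)) (w ⊗ₜ[k] (1:K)) := by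
  obtain ⟨s, h0, hsum⟩ := projMap_finsum St.RB.internal x
  conv_rhs => rw [← hsum]
  rw [sum_tmul, map_sum, LinearMap.sum_apply]
  rw [Finset.sum_eq_single 1]
  · intro n hn hn1
    exact tau_grade_ne_one St hn1 (projMap_mem St.RB.internal n x) hw
  · intro h1
    rw [h0 1 h1, zero_tmul, map_zero, LinearMap.zero_apply]

end QB

namespace QB

variable {k : Type} [Field k]
variable {J : Type} [Ring J] [Algebra k J] {R : Type} [Ring R] [Algebra k R]
variable {K S : Type} [Ring K] [Algebra k K] [Ring S] [Algebra k S]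
variable (St : Setup k J K R S)

/-- the projection onto the `n`-th graded piece of `R` -/
def piR (n : ℕ) : R →ₗ[k] R := projMap St.RB.internal n


lemma piR_mem (n : ℕ) (x : R) : piR St n x ∈ St.RB.grade n := projMap_mem St.RB.internal n x

lemma piR_of (n : ℕ) {m : ℕ} {x : R} (hx : x ∈ St.RB.grade m) :
    piR St n x = if m = n then x else 0 := projMap_of St.RB.internal n m hx

lemma piR_eq_self {n : ℕ} {x : R} (hx : x ∈ St.RB.grade n) : piR St n x = x :=
  projMap_eq_self St.RB.internal hx

lemma piR_eq_zero {m n : ℕ} (hmn : m ≠ n) {x : R} (hx : x ∈ St.RB.grade m) :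
    piR St n x = 0 := projMap_eq_zero St.RB.internal hmn hx

/-- `φ = (π₁ ⊗ id) ∘ Δ` -/
def phi : R →ₗ[k] R ⊗[k] R := (LinearMap.rTensor R (piR St 1)) ∘ₗ St.RB.comul

lemma phi_grade0 {x : R} (hx : x ∈ St.RB.grade 0) : phi St x = 0 := by
  rw [St.RB.grade0_eq hx, map_smul]
  have h1 : phi St 1 = 0 := by
    show (LinearMap.rTensor R (piR St 1)) (St.RB.comul 1) = 0
    rw [St.RB.comul_one, LinearMap.rTensor_tmul,
      piR_eq_zero St (by omega) St.RB.one_grade, zero_tmul]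
  rw [h1, smul_zero]

lemma lTensor_phi_grade {m : ℕ} {x : R} (hx : x ∈ St.RB.grade m) (b : ℕ) :
    (LinearMap.lTensor R (piR St b)) (phi St x) = if b + 1 = m then phi St x else 0 := by
  match m with
  | 0 =>
    rw [phi_grade0 St hx, map_zero, if_neg (by omega)]
  | (m+1) =>
    obtain ⟨p, d, e, xx, yy, hg, hc⟩ := St.RB.comul_grade x hx
    have hphi : phi St x = ∑ i, (piR St 1) (xx i) ⊗ₜ[k] yy i := by
      show (LinearMap.rTensor R (piR St 1)) (St.RB.comul x) = _
      rw [hc, map_sum]; rfl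
    rw [hphi, map_sum]
    by_cases hb : b + 1 = m + 1
    · rw [if_pos hb]
      refine Finset.sum_congr rfl fun i _ => ?_
      rw [LinearMap.lTensor_tmul]
      by_cases hd : d i = 1
      · have he : e i = b := by have := (hg i).1; omega
        rw [piR_of St b (hg i).2.2, if_pos he]
      · rw [piR_of St 1 (hg i).2.1, if_neg hd, zero_tmul, zero_tmul]
    · rw [if_neg hb]
      refine Finset.sum_eq_zero fun i _ => ?_
      rw [LinearMap.lTensor_tmul]
      by_cases hd : d i = 1
      · have he : e i ≠ b := by have := (hg i).1; omega
        rw [piR_of St b (hg i).2.2, if_neg he, tmul_zero]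
      · rw [piR_of St 1 (hg i).2.1, if_neg hd, zero_tmul]

lemma lTensor_phi_eq (a : ℕ) (ha : 1 ≤ a) :
    (LinearMap.lTensor R (piR St (a-1))) ∘ₗ phi St = phi St ∘ₗ piR St a := by
  refine ext_of_grades St.RB.internal fun m x hx => ?_
  rw [LinearMap.comp_apply, LinearMap.comp_apply, lTensor_phi_grade St hx (a-1)]
  rw [piR_of St a hx]
  by_cases h : m = a
  · rw [if_pos (by omega), if_pos h]
  · rw [if_neg (by omega), if_neg h, map_zero]

lemma pi1_phi_fix (x : R) :
    (LinearMap.rTensor R (piR St 1)) (phi St x) = phi St x := by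
  have hcomp : piR St 1 ∘ₗ piR St 1 = piR St 1 :=
    LinearMap.ext fun y => piR_eq_self St (piR_mem St 1 y)
  show (LinearMap.rTensor R (piR St 1)) ((LinearMap.rTensor R (piR St 1)) (St.RB.comul x)) = _
  rw [← LinearMap.comp_apply, ← LinearMap.rTensor_comp, hcomp]
  rfl

theorem phi_inj (hN : St.RB.IsNichols k) :
    ∀ n, 1 ≤ n → ∀ r ∈ St.RB.grade n, phi St r = 0 → r = 0 := by
  intro n
  induction n using Nat.strong_induction_on with
  | _ n IH =>
  intro hn r hr hphi
  rcases eq_or_lt_of_le hn with h1 | h2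
  · -- n = 1
    have hr1 : r ∈ St.RB.grade 1 := by rwa [← h1] at hr
    have hprim := St.RB.primitive_of_grade_one hr1
    have hval : phi St r = r ⊗ₜ[k] (1:R) := by
      show (LinearMap.rTensor R (piR St 1)) (St.RB.comul r) = _
      rw [hprim, map_add, LinearMap.rTensor_tmul, LinearMap.rTensor_tmul,
        piR_eq_self St hr1,
        piR_eq_zero St (by omega) St.RB.one_grade, zero_tmul, add_zero]
    rw [hval] at hphi
    have := congrArg (fun ξ => (TensorProduct.rid k R) ((LinearMap.lTensor R St.RB.counit) ξ)) hphi
    simpa [St.RB.counit_one] using this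
  · -- n ≥ 2
    obtain ⟨p, d, e, xx, yy, hg, hc⟩ := St.RB.comul_grade r hr
    -- step 1 : (φ ⊗ id)(Δ r) = 0
    have hY : (LinearMap.rTensor R (phi St)) (St.RB.comul r) = 0 := by
      have h0 : (LinearMap.lTensor R St.RB.comul) (phi St r) = 0 := by rw [hphi, map_zero]
      have h1 : (LinearMap.lTensor R St.RB.comul) (phi St r)
          = (LinearMap.rTensor (R ⊗[k] R) (piR St 1))
              ((LinearMap.lTensor R St.RB.comul) (St.RB.comul r)) :=
        lTensor_rTensor_comm (piR St 1) St.RB.comul (St.RB.comul r)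
      have h2 : (LinearMap.rTensor (R ⊗[k] R) (piR St 1))
            ((LinearMap.lTensor R St.RB.comul) (St.RB.comul r))
          = (TensorProduct.assoc k R R R)
              ((LinearMap.rTensor R (LinearMap.rTensor R (piR St 1)))
                ((LinearMap.rTensor R St.RB.comul) (St.RB.comul r))) := by
        rw [← St.RB.coassoc r, assoc_rTensor_rTensor]
      have h3 : (LinearMap.rTensor R (LinearMap.rTensor R (piR St 1)))
          ((LinearMap.rTensor R St.RB.comul) (St.RB.comul r)) = 0 := by
        have h4 := h0
        rw [h1, h2] at h4
        exact (LinearEquiv.map_eq_zero_iff _).mp h4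
      show (LinearMap.rTensor R ((LinearMap.rTensor R (piR St 1)) ∘ₗ St.RB.comul))
          (St.RB.comul r) = 0
      rw [LinearMap.rTensor_comp, LinearMap.comp_apply]
      exact h3
    set Kc : ℕ → R ⊗[k] R :=
      fun a => (TensorProduct.map (piR St a) (piR St (n-a))) (St.RB.comul r) with hKc
    have hKsum : ∑ a ∈ Finset.range (n+1), Kc a = St.RB.comul r := by
      simp only [hKc, hc, map_sum]
      rw [Finset.sum_comm]
      refine Finset.sum_congr rfl fun i _ => ?_
      rw [Finset.sum_eq_single (d i)]
      · rw [TensorProduct.map_tmul,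
          piR_eq_self St (hg i).2.1,
          show n - d i = e i from (by have := (hg i).1; omega),
          piR_eq_self St (hg i).2.2]
      · intro a _ hne
        rw [TensorProduct.map_tmul,
          piR_eq_zero St (Ne.symm hne) (hg i).2.1, zero_tmul]
      · intro hd
        exact absurd (Finset.mem_range.mpr (by have := (hg i).1; omega)) hd
    have hK0 : Kc 0 = (1:R) ⊗ₜ[k] r := by
      have hr' := St.RB.counit_comul' r hc
      simp only [hKc, hc, map_sum]
      have : ∀ i, (TensorProduct.map (piR St 0) (piR St (n-0))) (xx i ⊗ₜ[k] yy i)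
          = (1:R) ⊗ₜ[k] (St.RB.counit (xx i) • yy i) := by
        intro i
        rw [TensorProduct.map_tmul]
        by_cases hd : d i = 0
        · have he : e i = n := by have := (hg i).1; omega
          rw [show (piR St 0) (xx i) = xx i from
              piR_eq_self St (hd ▸ (hg i).2.1),
            show (piR St (n-0)) (yy i) = yy i from
              piR_eq_self St (by simpa [he] using (hg i).2.2)]
          conv_lhs => rw [show xx i = St.RB.counit (xx i) • (1:R) from
            St.RB.grade0_eq (hd ▸ (hg i).2.1)]
          rw [TensorProduct.smul_tmul]
        · rw [show (piR St 0) (xx i) = 0 from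
              piR_eq_zero St hd (hg i).2.1, zero_tmul,
            St.RB.counit_grade_pos St.RB_pre (by omega) (hg i).2.1, zero_smul, tmul_zero]
      rw [Finset.sum_congr rfl fun i _ => this i, ← tmul_sum, hr']
    have hKn : Kc n = r ⊗ₜ[k] (1:R) := by
      have hr' := St.RB.comul_counit' r hc
      simp only [hKc, hc, map_sum]
      have : ∀ i, (TensorProduct.map (piR St n) (piR St (n-n))) (xx i ⊗ₜ[k] yy i)
          = (St.RB.counit (yy i) • xx i) ⊗ₜ[k] (1:R) := by
        intro i
        rw [TensorProduct.map_tmul]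
        by_cases he : e i = 0
        · have hd : d i = n := by have := (hg i).1; omega
          rw [show (piR St n) (xx i) = xx i from
              piR_eq_self St (hd ▸ (hg i).2.1),
            show (piR St (n-n)) (yy i) = yy i from
              piR_eq_self St (by simpa [he] using (hg i).2.2)]
          conv_lhs => rw [show yy i = St.RB.counit (yy i) • (1:R) from
            St.RB.grade0_eq (he ▸ (hg i).2.2)]
          rw [tmul_smul, TensorProduct.smul_tmul']
        · have hd : d i ≠ n := by have := (hg i).1; omega
          rw [show (piR St n) (xx i) = 0 from
              piR_eq_zero St hd (hg i).2.1, zero_tmul,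
            St.RB.counit_grade_pos St.RB_pre (by omega) (hg i).2.2, zero_smul, zero_tmul]
      rw [Finset.sum_congr rfl fun i _ => this i, ← sum_tmul, hr']
    have hK1 : Kc 1 = 0 := by
      have : Kc 1 = (LinearMap.lTensor R (piR St (n-1)))
          ((LinearMap.rTensor R (piR St 1)) (St.RB.comul r)) := by
        rw [← LinearMap.comp_apply, LinearMap.lTensor_comp_rTensor]
      rw [this]
      have hphir : (LinearMap.rTensor R (piR St 1)) (St.RB.comul r) = phi St r := rfl
      rw [hphir, hphi, map_zero]
    have hKmid : ∀ a, 2 ≤ a → a ≤ n - 1 → Kc a = 0 := by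
      intro a ha2 han
      have hphiK : (LinearMap.rTensor R (phi St)) (Kc a) = 0 := by
        have hop : (TensorProduct.map (LinearMap.lTensor R (piR St (a-1))) (piR St (n-a)))
              ∘ₗ (LinearMap.rTensor R (phi St))
            = (LinearMap.rTensor R (phi St))
              ∘ₗ (TensorProduct.map (piR St a) (piR St (n-a))) := by
          show (TensorProduct.map (LinearMap.lTensor R (piR St (a-1))) (piR St (n-a)))
              ∘ₗ (TensorProduct.map (phi St) LinearMap.id) = _
          rw [← TensorProduct.map_comp]
          show TensorProduct.map ((LinearMap.lTensor R (piR St (a-1))) ∘ₗ phi St) _ = _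
          rw [lTensor_phi_eq St a (by omega)]
          show TensorProduct.map (phi St ∘ₗ piR St a) (LinearMap.id ∘ₗ piR St (n-a)) = _
          rw [TensorProduct.map_comp]
          rfl
        have := congrArg (TensorProduct.map (LinearMap.lTensor R (piR St (a-1)))
          (piR St (n-a))) hY
        rw [map_zero, ← LinearMap.comp_apply, hop, LinearMap.comp_apply] at this
        rw [hKc]
        exact this
      set Gr := St.RB.grade a
      set ψ : Gr →ₗ[k] R ⊗[k] R := phi St ∘ₗ Gr.subtype with hψ
      have hψinj : Function.Injective ψ := by
        rw [← LinearMap.ker_eq_bot]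
        rw [LinearMap.ker_eq_bot']
        intro z hz
        have := IH a (by omega) (by omega) z.1 z.2 hz
        exact Subtype.ext this
      set ρ : R →ₗ[k] Gr := (piR St a).codRestrict Gr (piR_mem St a) with hρ
      set Kt : Gr ⊗[k] R := (TensorProduct.map ρ (piR St (n-a))) (St.RB.comul r) with hKt
      have hlift : (LinearMap.rTensor R Gr.subtype) Kt = Kc a := by
        rw [hKt, ← LinearMap.comp_apply]
        show ((TensorProduct.map Gr.subtype LinearMap.id)
          ∘ₗ (TensorProduct.map ρ (piR St (n-a)))) (St.RB.comul r) = _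
        rw [← TensorProduct.map_comp]
        rw [show Gr.subtype ∘ₗ ρ = piR St a from LinearMap.subtype_comp_codRestrict _ _ _]
        rfl
      have hψKt : (LinearMap.rTensor R ψ) Kt = 0 := by
        rw [hKt, ← LinearMap.comp_apply]
        show ((TensorProduct.map ψ LinearMap.id)
          ∘ₗ (TensorProduct.map ρ (piR St (n-a)))) (St.RB.comul r) = 0
        rw [← TensorProduct.map_comp]
        have hψρ : ψ ∘ₗ ρ = phi St ∘ₗ piR St a := by
          rw [hψ, LinearMap.comp_assoc,
            show Gr.subtype ∘ₗ ρ = piR St a from LinearMap.subtype_comp_codRestrict _ _ _]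
        rw [hψρ, show LinearMap.id ∘ₗ piR St (n-a) = (LinearMap.id : R →ₗ[k] R) ∘ₗ piR St (n-a) from rfl]
        rw [TensorProduct.map_comp]
        show (LinearMap.rTensor R (phi St)) ((TensorProduct.map (piR St a) (piR St (n-a)))
          (St.RB.comul r)) = 0
        exact hphiK
      have hKt0 : Kt = 0 :=
        Module.Flat.rTensor_preserves_injective_linearMap (M := R) ψ hψinj
          (by rw [hψKt, map_zero])
      rw [← hlift, hKt0, map_zero]
    have hΔ : St.RB.comul r = r ⊗ₜ[k] (1:R) + (1:R) ⊗ₜ[k] r := by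
      rw [← hKsum]
      have hsub : ({0, n} : Finset ℕ) ⊆ Finset.range (n+1) := by
        intro a ha
        simp only [Finset.mem_insert, Finset.mem_singleton] at ha
        rcases ha with rfl | rfl <;> simp [Finset.mem_range] <;> omega
      rw [← Finset.sum_subset hsub ?hz]
      · rw [Finset.sum_pair (by omega : (0:ℕ) ≠ n), hK0, hKn, add_comm]
      case hz =>
        intro a har hans
        simp only [Finset.mem_insert, Finset.mem_singleton, not_or] at hans
        rcases Nat.lt_or_ge a 2 with hlt | hge
        · interval_cases a
          · exact absurd rfl hans.1
          · exact hK1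
        · refine hKmid a hge ?_
          have : a < n + 1 := Finset.mem_range.mp har
          omega
    have hprim : r ∈ St.RB.primitives k := hΔ
    have hr1 : r ∈ St.RB.grade 1 := by
      have hset := hN.2
      have : r ∈ (St.RB.grade 1 : Set R) := by rw [hset]; exact hprim
      exact this
    exact grade_disjoint St.RB.internal (by omega : n ≠ 1) hr hr1

end QB

namespace QB

variable {k : Type} [Field k]
variable {J : Type} [Ring J] [Algebra k J] {R : Type} [Ring R] [Algebra k R]
variable {K S : Type} [Ring K] [Algebra k K] [Ring S] [Algebra k S]
variable (St : Setup k J K R S)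

/-- nondegeneracy transfer to tensors supported in degree one on the left -/
lemma tensor_nondeg
    (hinj : ∀ v ∈ St.RB.grade 1, (∀ w ∈ St.SB.grade 1, St.tauRS v w = 0) → v = 0)
    (ξ : R ⊗[k] R)
    (hξ : (LinearMap.rTensor R (piR St 1)) ξ = ξ)
    (h0 : ∀ w ∈ St.SB.grade 1, (LinearMap.rTensor R (St.tauRS.flip w)) ξ = 0) : ξ = 0 := by
  classical
  set b := Module.Basis.ofVectorSpace k R with hb
  obtain ⟨s, v, hv0, hrep⟩ := exists_basis_rep b ξ
  subst hrep
  have hpi : ∀ j ∈ s, piR St 1 (v j) = v j := by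
    have hξ' : ∑ j ∈ s, (piR St 1 (v j)) ⊗ₜ[k] (b j : R) = ∑ j ∈ s, v j ⊗ₜ[k] (b j : R) := by
      rw [← hξ, map_sum]
      rfl
    have hz : ∑ j ∈ s, (piR St 1 (v j) - v j) ⊗ₜ[k] (b j : R) = 0 := by
      simp only [sub_tmul, Finset.sum_sub_distrib, hξ', sub_self]
    exact fun j hj => sub_eq_zero.mp (basis_rep_cancel b s _ hz j hj)
  have hvg : ∀ j ∈ s, v j ∈ St.RB.grade 1 := fun j hj => by
    rw [← hpi j hj]; exact piR_mem St 1 (v j)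
  have hτ : ∀ j ∈ s, ∀ w ∈ St.SB.grade 1, St.tauRS (v j) w = 0 := by
    intro j hj w hw
    have h1 := h0 w hw
    rw [map_sum] at h1
    have hlid : ∑ j ∈ s, St.tauRS (v j) w • (b j : R) = 0 := by
      have := congrArg (TensorProduct.lid k R) h1
      rw [map_sum, map_zero] at this
      simpa using this
    exact scalar_combo_cancel b.linearIndependent s _ hlid j hj
  refine Finset.sum_eq_zero fun j hj => ?_
  rw [hinj (v j) (hvg j hj) (hτ j hj), zero_tmul]

lemma sAct_phi (w : S) (r : R) :
    St.sAct w r = (TensorProduct.lid k R)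
      ((LinearMap.rTensor R (St.tauRS.flip w)) (St.RB.comul r)) := rfl

lemma factA (hinj : ∀ v ∈ St.RB.grade 1, (∀ w ∈ St.SB.grade 1, St.tauRS v w = 0) → v = 0)
    (hN : St.RB.IsNichols k) {n : ℕ} (hn : 1 ≤ n) {r : R} (hr : r ∈ St.RB.grade n)
    (h : ∀ w ∈ St.SB.grade 1, St.sAct w r = 0) : r = 0 := by
  have key : ∀ w ∈ St.SB.grade 1,
      (LinearMap.rTensor R (St.tauRS.flip w)) (phi St r) = 0 := by
    intro w hw
    have hop : St.tauRS.flip w ∘ₗ piR St 1 = St.tauRS.flip w := by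
      refine LinearMap.ext fun x => ?_
      show St.tauRS (piR St 1 x) w = St.tauRS x w
      rw [tauRS_apply, tauRS_apply]
      exact tau_w_pi1 St hw x
    have h1 : (LinearMap.rTensor R (St.tauRS.flip w)) (phi St r)
        = (LinearMap.rTensor R (St.tauRS.flip w)) (St.RB.comul r) := by
      show (LinearMap.rTensor R (St.tauRS.flip w))
        ((LinearMap.rTensor R (piR St 1)) (St.RB.comul r)) = _
      rw [← LinearMap.comp_apply, ← LinearMap.rTensor_comp, hop]
    have h2 : (LinearMap.rTensor R (St.tauRS.flip w)) (St.RB.comul r) = 0 := by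
      have h3 := h w hw
      rw [sAct_phi] at h3
      exact (LinearEquiv.map_eq_zero_iff _).mp h3
    rw [h1, h2]
  exact phi_inj St hN n hn r hr (tensor_nondeg St hinj (phi St r) (pi1_phi_fix St r) key)

theorem part1 (hinj : ∀ v ∈ St.RB.grade 1, (∀ w ∈ St.SB.grade 1, St.tauRS v w = 0) → v = 0)
    (hN : St.RB.IsNichols k) :
    (⨅ w ∈ St.SB.grade 1, LinearMap.ker (St.sAct w)) = Submodule.span k {(1 : R)} := by
  apply le_antisymm
  · intro r hr
    simp only [Submodule.mem_iInf, LinearMap.mem_ker] at hr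
    obtain ⟨s, h0, hsum⟩ := projMap_finsum St.RB.internal r
    rw [← hsum]
    refine Submodule.sum_mem _ fun n hn => ?_
    rcases Nat.eq_zero_or_pos n with h1 | h1
    · subst h1
      rw [← St.RB.grade0]
      exact projMap_mem St.RB.internal 0 r
    · suffices hz : projMap St.RB.internal n r = 0 by
        rw [hz]; exact Submodule.zero_mem _
      refine factA St hinj hN h1 (projMap_mem St.RB.internal n r) ?_
      intro w hw
      have hsep : ∑ m ∈ s, St.sAct w (projMap St.RB.internal m r) = 0 := by
        rw [← map_sum, hsum]
        exact hr w hw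
      have hproj := congrArg (projMap St.RB.internal (n-1)) hsep
      rw [map_sum, map_zero] at hproj
      rw [Finset.sum_eq_single n] at hproj
      · rwa [projMap_eq_self St.RB.internal
          (sAct_grade St hw (projMap_mem St.RB.internal n r))] at hproj
      · intro m _ hmn
        by_cases hm0 : m = 0
        · subst hm0
          rw [sAct_grade0 St hw (projMap_mem St.RB.internal 0 r), map_zero]
        · exact projMap_eq_zero St.RB.internal (by omega)
            (sAct_grade St hw (projMap_mem St.RB.internal m r))
      · intro hns
        rw [h0 n hns, map_zero, map_zero]
  · rw [Submodule.span_le]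
    intro x hx
    rw [Set.mem_singleton_iff] at hx
    subst hx
    simp only [SetLike.mem_coe, Submodule.mem_iInf, LinearMap.mem_ker]
    intro w hw
    exact sAct_one_left St hw

end QB

namespace QB

variable {k : Type} [Field k]
variable {J : Type} [Ring J] [Algebra k J] {R : Type} [Ring R] [Algebra k R]
variable {K S : Type} [Ring K] [Algebra k K] [Ring S] [Algebra k S]
variable (St : Setup k J K R S)

/-- the skew-derivation property of `s ▷ -` on products `v * y`, `v ∈ V` -/
lemma star {v : R} (hv : v ∈ St.RB.grade 1) {w : S} (hw : w ∈ St.SB.grade 1)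
    {p q : ℕ} {vJ : Fin p → J} {vV : Fin p → R} {wK : Fin q → K} {wW : Fin q → S}
    (hcv : St.RB.coact v = ∑ i, vJ i ⊗ₜ[k] vV i)
    (hcw : St.SB.coact w = ∑ j, wK j ⊗ₜ[k] wW j)
    (hwW : ∀ j, wW j ∈ St.SB.grade 1) (y : R) :
    St.sAct w (v * y)
      = (∑ i, ∑ j, St.τ₀ (vJ i) (wK j) • (vV i * St.sAct (wW j) y))
        + St.τ (v ⊗ₜ[k] (1:J)) (w ⊗ₜ[k] (1:K)) • y := by
  obtain ⟨u, y1, y2, hy⟩ := exists_fin_rep (St.RB.comul y)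
  have hprim := St.RB.primitive_of_grade_one hv
  have h1 : St.RB.comul v
      = ∑ i : Fin 2, (![v,1] : Fin 2 → R) i ⊗ₜ[k] (![1,v] : Fin 2 → R) i := by
    rw [hprim, Fin.sum_univ_two]; simp
  have h2 : ∀ i : Fin 2, St.RB.coact ((![1,v] : Fin 2 → R) i)
      = ∑ j : Fin (p+1),
          (![Fin.cases 1 (fun _ => 0), Fin.cases 0 vJ] : Fin 2 → Fin (p+1) → J) i j ⊗ₜ[k]
          (![Fin.cases 1 (fun _ => 0), Fin.cases 0 vV] : Fin 2 → Fin (p+1) → R) i j := by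
    intro i; fin_cases i
    · rw [Fin.sum_univ_succ]; simpa using St.RB.coact_one
    · rw [Fin.sum_univ_succ]; simpa using hcv
  have hΔ := St.RB.comul_mul v y 2 (p+1) u _ _ _ _ y1 y2 h1 h2 hy
  have hΔ' : St.RB.comul (v * y)
      = ∑ t, (v * y1 t) ⊗ₜ[k] y2 t
        + ∑ i, ∑ t, (St.RB.act (vJ i) (y1 t)) ⊗ₜ[k] (vV i * y2 t) := by
    rw [hΔ, Fin.sum_univ_two, Fin.sum_univ_succ, Fin.sum_univ_succ]
    simp [St.RB.act_one]
  have hexp : St.sAct w (v * y)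
      = ∑ t, St.τ ((v * y1 t) ⊗ₜ[k] (1:J)) (w ⊗ₜ[k] (1:K)) • y2 t
        + ∑ i, ∑ t, St.τ ((St.RB.act (vJ i) (y1 t)) ⊗ₜ[k] (1:J)) (w ⊗ₜ[k] (1:K))
            • (vV i * y2 t) := by
    rw [sAct_phi St w (v*y), hΔ']
    simp only [map_add, map_sum, LinearMap.rTensor_tmul, TensorProduct.lid_tmul,
      LinearMap.flip_apply]
    rfl
  rw [hexp]
  have ht1 : ∑ t, St.τ ((v * y1 t) ⊗ₜ[k] (1:J)) (w ⊗ₜ[k] (1:K)) • y2 t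
      = St.τ (v ⊗ₜ[k] (1:J)) (w ⊗ₜ[k] (1:K)) • y := by
    have hco := St.RB.counit_comul' y hy
    calc ∑ t, St.τ ((v * y1 t) ⊗ₜ[k] (1:J)) (w ⊗ₜ[k] (1:K)) • y2 t
        = ∑ t, St.τ (v ⊗ₜ[k] (1:J)) (w ⊗ₜ[k] (1:K)) • (St.RB.counit (y1 t) • y2 t) := by
          refine Finset.sum_congr rfl fun t _ => ?_
          rw [tau_mul_v St hw hcw hwW hv (y1 t), ← smul_smul]
      _ = _ := by rw [← Finset.smul_sum, hco]
  have ht2 : ∀ i, ∑ t, St.τ ((St.RB.act (vJ i) (y1 t)) ⊗ₜ[k] (1:J)) (w ⊗ₜ[k] (1:K))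
        • (vV i * y2 t)
      = ∑ j, St.τ₀ (vJ i) (wK j) • (vV i * St.sAct (wW j) y) := by
    intro i
    calc ∑ t, St.τ ((St.RB.act (vJ i) (y1 t)) ⊗ₜ[k] (1:J)) (w ⊗ₜ[k] (1:K)) • (vV i * y2 t)
        = ∑ t, ∑ j, (St.τ₀ (vJ i) (wK j)
            * St.τ (y1 t ⊗ₜ[k] (1:J)) (wW j ⊗ₜ[k] (1:K))) • (vV i * y2 t) := by
          refine Finset.sum_congr rfl fun t _ => ?_
          rw [tau_act St hw hcw hwW (vJ i) (y1 t), Finset.sum_smul]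
      _ = ∑ j, ∑ t, St.τ₀ (vJ i) (wK j)
            • (St.τ (y1 t ⊗ₜ[k] (1:J)) (wW j ⊗ₜ[k] (1:K)) • (vV i * y2 t)) := by
          rw [Finset.sum_comm]
          exact Finset.sum_congr rfl fun j _ => Finset.sum_congr rfl fun t _ => by
            rw [← smul_smul]
      _ = ∑ j, St.τ₀ (vJ i) (wK j) • (vV i * St.sAct (wW j) y) := by
          refine Finset.sum_congr rfl fun j _ => ?_
          rw [← Finset.smul_sum]
          congr 1
          rw [sAct_apply St (wW j) y hy, Finset.mul_sum]
          exact Finset.sum_congr rfl fun t _ => (mul_smul_comm _ _ _).symm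
  rw [Finset.sum_congr rfl (fun i _ => ht2 i), ht1, add_comm]

end QB

namespace QB

variable {k : Type} [Field k]
variable {J : Type} [Ring J] [Algebra k J] {R : Type} [Ring R] [Algebra k R]
variable {K S : Type} [Ring K] [Algebra k K] [Ring S] [Algebra k S]

theorem statement15 (St : Setup k J K R S)
    (Q : QBosonAlg St)
    -- τ₁^l : V → W* is injective
    (hinj : ∀ v ∈ St.RB.grade 1, (∀ w ∈ St.SB.grade 1, St.tauRS v w = 0) → v = 0)
    -- R is the Nichols algebra of V
    (hN : St.RB.IsNichols k) :
    -- (1)  R₀ = k : the subspace of the Verma module R annihilated by S(1) is k·1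
    ((⨅ w ∈ St.SB.grade 1, LinearMap.ker (St.sAct w)) = Submodule.span k {(1 : R)}) ∧
    -- (2)  for every left ℬ-module M, the ℬ-linear map κ_M : R ⊗ M₀ → M, r ⊗ m ↦ rm,
    --      is injective
    (∀ (M : Type) (_ : AddCommGroup M) (_ : Module k M)
       (bact : (R ⊗[k] S) →ₗ[k] M →ₗ[k] M),
      (∀ m : M, bact ((1 : R) ⊗ₜ[k] (1 : S)) m = m) →
      (∀ (x y : R ⊗[k] S) (m : M), bact (Q.Bmul x y) m = bact x (bact y m)) →
      Function.Injective
        ⇑(TensorProduct.lift (LinearMap.compl₂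
          (bact ∘ₗ ((TensorProduct.mk k R S).flip 1))
          (⨅ w ∈ St.SB.grade 1,
            LinearMap.ker (bact ((1 : R) ⊗ₜ[k] w))).subtype))) := by
  have hpart1 := part1 St hinj hN
  refine ⟨hpart1, ?_⟩
  intro M _ _ bact hone hassoc
  classical
  set M₀ : Submodule k M :=
    ⨅ w ∈ St.SB.grade 1, LinearMap.ker (bact ((1 : R) ⊗ₜ[k] w)) with hM₀
  set κ : R ⊗[k] ↥M₀ →ₗ[k] M := TensorProduct.lift (LinearMap.compl₂
    (bact ∘ₗ ((TensorProduct.mk k R S).flip 1)) M₀.subtype) with hκ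
  have hκ_apply : ∀ (r : R) (m : ↥M₀), κ (r ⊗ₜ[k] m) = bact (r ⊗ₜ[k] (1:S)) (m : M) :=
    fun r m => rfl
  have hM₀0 : ∀ m : M, m ∈ M₀ → ∀ w ∈ St.SB.grade 1, bact ((1:R) ⊗ₜ[k] w) m = 0 := by
    intro m hm w hw
    rw [hM₀] at hm
    simp only [Submodule.mem_iInf, LinearMap.mem_ker] at hm
    exact hm w hw
  -- Lemma D : for `m ∈ M₀`, `w · (r · m) = (w ▷ r) · m`
  have main : ∀ r ∈ Submonoid.closure (St.RB.grade 1 : Set R), ∀ w ∈ St.SB.grade 1,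
      ∀ m : M, m ∈ M₀ →
      bact ((1:R) ⊗ₜ[k] w) (bact (r ⊗ₜ[k] (1:S)) m)
        = bact ((St.sAct w r) ⊗ₜ[k] (1:S)) m := by
    intro r hr
    refine Submonoid.closure_induction_left
      (motive := fun r _ => ∀ w ∈ St.SB.grade 1, ∀ m : M, m ∈ M₀ →
        bact ((1:R) ⊗ₜ[k] w) (bact (r ⊗ₜ[k] (1:S)) m)
          = bact ((St.sAct w r) ⊗ₜ[k] (1:S)) m) ?_ ?_ hr
    · intro w hw m hm
      rw [hone, hM₀0 m hm w hw, sAct_one_left St hw, zero_tmul, map_zero,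
        LinearMap.zero_apply]
    · intro v hv x _ ihx w hw m hm
      obtain ⟨p, vJ, vV, hvV, hcv⟩ := St.RB.coact_grade v hv
      obtain ⟨q, wK, wW, hwW, hcw⟩ := St.SB.coact_grade w hw
      have hBmul := Q.mul_wv v w hv hw p q vJ vV wK wW hcv hcw
      have hstar := star St hv hw hcv hcw hwW x
      have hLHS : bact ((1:R) ⊗ₜ[k] w) (bact ((v * x) ⊗ₜ[k] (1:S)) m)
          = bact (Q.Bmul ((1:R) ⊗ₜ[k] w) (v ⊗ₜ[k] (1:S))) (bact (x ⊗ₜ[k] (1:S)) m) := by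
        rw [← Q.mul_rr v x, hassoc, ← hassoc]
      rw [hLHS, hBmul, map_add, LinearMap.add_apply, map_sum, LinearMap.sum_apply]
      have hterm : ∀ i, (bact (∑ j, St.τ₀ (vJ i) (wK j) • (vV i ⊗ₜ[k] wW j)))
            (bact (x ⊗ₜ[k] (1:S)) m)
          = ∑ j, St.τ₀ (vJ i) (wK j) • bact ((vV i * St.sAct (wW j) x) ⊗ₜ[k] (1:S)) m := by
        intro i
        rw [map_sum, LinearMap.sum_apply]
        refine Finset.sum_congr rfl fun j _ => ?_
        rw [map_smul, LinearMap.smul_apply]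
        congr 1
        have hvw : vV i ⊗ₜ[k] wW j
            = Q.Bmul (vV i ⊗ₜ[k] (1:S)) ((1:R) ⊗ₜ[k] wW j) := (Q.mul_rs _ _).symm
        rw [hvw, hassoc, ihx (wW j) (hwW j) m hm, ← Q.mul_rr, hassoc]
      rw [Finset.sum_congr rfl fun i _ => hterm i]
      rw [map_smul, LinearMap.smul_apply, hone]
      rw [hstar, add_tmul, map_add, LinearMap.add_apply]
      rw [← TensorProduct.smul_tmul', map_smul, LinearMap.smul_apply]
      congr 1
      rw [sum_tmul, map_sum, LinearMap.sum_apply]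
      refine Finset.sum_congr rfl fun i _ => ?_
      rw [sum_tmul, map_sum, LinearMap.sum_apply]
      refine Finset.sum_congr rfl fun j _ => ?_
      rw [← TensorProduct.smul_tmul', map_smul, LinearMap.smul_apply]
  have lemD : ∀ (r : R), ∀ w ∈ St.SB.grade 1, ∀ m : M, m ∈ M₀ →
      bact ((1:R) ⊗ₜ[k] w) (bact (r ⊗ₜ[k] (1:S)) m)
        = bact ((St.sAct w r) ⊗ₜ[k] (1:S)) m := by
    intro r w hw m hm
    have hspan : Submodule.span k
        ((Submonoid.closure (St.RB.grade 1 : Set R) : Submonoid R) : Set R) = ⊤ := by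
      have := congrArg Subalgebra.toSubmodule St.RB_pre
      rw [Algebra.adjoin_eq_span] at this
      simpa using this
    set B1 : R →ₗ[k] M →ₗ[k] M := bact ∘ₗ ((TensorProduct.mk k R S).flip (1:S)) with hB1
    set F : R →ₗ[k] M := (bact ((1:R) ⊗ₜ[k] w)) ∘ₗ (B1.flip m) with hF
    set G : R →ₗ[k] M := (B1.flip m) ∘ₗ (St.sAct w) with hG
    have hFr : ∀ r : R, F r = bact ((1:R) ⊗ₜ[k] w) (bact (r ⊗ₜ[k] (1:S)) m) := fun _ => rfl
    have hGr : ∀ r : R, G r = bact ((St.sAct w r) ⊗ₜ[k] (1:S)) m := fun _ => rfl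
    have hmem : r ∈ Submodule.span k
        ((Submonoid.closure (St.RB.grade 1 : Set R) : Submonoid R) : Set R) := by
      rw [hspan]; trivial
    have : F r = G r := by
      refine Submodule.span_induction (p := fun r _ => F r = G r) ?_ ?_ ?_ ?_ hmem
      · intro z hz
        rw [hFr, hGr]
        exact main z hz w hw m hm
      · simp
      · intro a c _ _ h1 h2
        rw [map_add, map_add, h1, h2]
      · intro c a _ h1
        rw [map_smul, map_smul, h1]
    rw [hFr, hGr] at this
    exact this
  -- the basis of M₀ and the degree induction
  set b := Module.Basis.ofVectorSpace k ↥M₀ with hb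
  have hlin : LinearIndependent k (fun j => ((b j : M))) :=
    b.linearIndependent.map' M₀.subtype (Submodule.ker_subtype M₀)
  have hgrade0_case : ∀ (s : Finset _) (v : _ → R), (∀ j ∈ s, v j ∈ St.RB.grade 0) →
      κ (∑ j ∈ s, v j ⊗ₜ[k] b j) = 0 → ∀ j ∈ s, v j = 0 := by
    intro s v hv hκ0 j hj
    have hκs : κ (∑ j ∈ s, v j ⊗ₜ[k] b j)
        = ∑ j ∈ s, St.RB.counit (v j) • ((b j : M)) := by
      rw [map_sum]
      refine Finset.sum_congr rfl fun j' hj' => ?_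
      conv_lhs => rw [show v j' = St.RB.counit (v j') • (1:R) from
        St.RB.grade0_eq (hv j' hj')]
      rw [← TensorProduct.smul_tmul', map_smul, hκ_apply, hone]
    rw [hκs] at hκ0
    have hc0 := scalar_combo_cancel hlin s _ hκ0 j hj
    rw [St.RB.grade0_eq (hv j hj), hc0, zero_smul]
  have key : ∀ N : ℕ, ∀ (s : Finset _) (v : _ → R),
      (∀ j ∈ s, ∀ n, N < n → projMap St.RB.internal n (v j) = 0) →
      κ (∑ j ∈ s, v j ⊗ₜ[k] b j) = 0 → ∀ j ∈ s, v j = 0 := by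
    intro N
    induction N with
    | zero =>
      intro s v hbd hκ0
      refine hgrade0_case s v ?_ hκ0
      intro j hj
      obtain ⟨s', h0, hsum⟩ := projMap_finsum St.RB.internal (v j)
      rw [← hsum]
      refine Submodule.sum_mem _ fun n hn => ?_
      rcases Nat.eq_zero_or_pos n with rfl | hpos
      · exact projMap_mem St.RB.internal 0 (v j)
      · rw [hbd j hj n hpos]; exact Submodule.zero_mem _
    | succ N IH =>
      intro s v hbd hκ0
      have hstep : ∀ w ∈ St.SB.grade 1, ∀ j ∈ s, St.sAct w (v j) = 0 := by
        intro w hw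
        refine IH s (fun j => St.sAct w (v j)) ?_ ?_
        · intro j hj n hn
          show projMap St.RB.internal n (St.sAct w (v j)) = 0
          obtain ⟨s', h0, hsum⟩ := projMap_finsum St.RB.internal (v j)
          have hvj : St.sAct w (v j)
              = ∑ m' ∈ s', St.sAct w (projMap St.RB.internal m' (v j)) := by
            rw [← map_sum, hsum]
          rw [hvj, map_sum]
          refine Finset.sum_eq_zero fun m' _ => ?_
          by_cases hmN : m' ≤ N + 1
          · exact projMap_eq_zero St.RB.internal (by omega)
              (sAct_grade St hw (projMap_mem St.RB.internal m' (v j)))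
          · rw [hbd j hj m' (by omega), map_zero, map_zero]
        · show κ (∑ j ∈ s, (St.sAct w (v j)) ⊗ₜ[k] b j) = 0
          have hcomm : κ (∑ j ∈ s, (St.sAct w (v j)) ⊗ₜ[k] b j)
              = bact ((1:R) ⊗ₜ[k] w) (κ (∑ j ∈ s, v j ⊗ₜ[k] b j)) := by
            rw [map_sum, map_sum, map_sum]
            refine Finset.sum_congr rfl fun j _ => ?_
            rw [hκ_apply, hκ_apply]
            exact (lemD (v j) w hw (b j : M) (SetLike.coe_mem (b j))).symm
          rw [hcomm, hκ0, map_zero]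
      refine hgrade0_case s v ?_ hκ0
      intro j hj
      have hv0 : v j ∈ Submodule.span k {(1:R)} := by
        rw [← hpart1]
        simp only [Submodule.mem_iInf, LinearMap.mem_ker]
        intro w hw
        exact hstep w hw j hj
      rwa [St.RB.grade0]
  have hker : ∀ t, κ t = 0 → t = 0 := by
    intro t ht
    obtain ⟨s, v, hv0, rfl⟩ := exists_basis_rep b t
    set Nb : ℕ := s.sup (fun j => (projMap_finsum St.RB.internal (v j)).choose.sup id)
      with hNb
    have hbd : ∀ j ∈ s, ∀ n, Nb < n → projMap St.RB.internal n (v j) = 0 := by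
      intro j hj n hn
      by_contra hne
      have hmem : n ∈ (projMap_finsum St.RB.internal (v j)).choose := by
        by_contra hnot
        exact hne ((projMap_finsum St.RB.internal (v j)).choose_spec.1 n hnot)
      have h1 : n ≤ (projMap_finsum St.RB.internal (v j)).choose.sup id :=
        Finset.le_sup (f := id) hmem
      have h2 : (projMap_finsum St.RB.internal (v j)).choose.sup id ≤ Nb :=
        Finset.le_sup (f := fun j => (projMap_finsum St.RB.internal (v j)).choose.sup id) hj
      omega
    have := key Nb s v hbd ht
    exact Finset.sum_eq_zero fun j hj => by rw [this j hj, zero_tmul]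
  exact LinearMap.ker_eq_bot.mp (LinearMap.ker_eq_bot'.mpr hker)

end QB
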